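/- Let $S_-, S_+ \subseteq \mathbb{R}^n$ be finite strictly linearly separable sets. Define the must-leak set $B = \{x \in S_- : x \notin \mathrm{Safe}(S_- \setminus \{x\}, S_+)\}$ and let $V$ be the set of vertices (extreme points) of the convex set $\mathrm{Safe}(S_-, S_+)$ that lie in $S_-$. Then $B = V$. -/

import Mathlib

/-- The safe points: those classified negative by every hyperplane `(d, c)` separating
`A` (negatives, weakly) from `A₊` (positives, strictly). -/
def Safe (n : ℕ) (A Ap : Set (Fin n → ℝ)) : Set (Fin n → ℝ) :=
  {z | ∀ (d : Fin n → ℝ) (c : ℝ),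
    (∀ a ∈ A, ∑ i, d i * a i ≤ c) → (∀ b ∈ Ap, ∑ i, d i * b i > c) →
    ∑ i, d i * z i ≤ c}

section Aux

open Set

variable {n : ℕ}

/-- The linear functional given by a coefficient vector. -/
def lin (d z : Fin n → ℝ) : ℝ := ∑ i, d i * z i

lemma mem_Safe {A Ap : Set (Fin n → ℝ)} {z : Fin n → ℝ} :
    z ∈ Safe n A Ap ↔ ∀ (d : Fin n → ℝ) (c : ℝ),
      (∀ a ∈ A, lin d a ≤ c) → (∀ b ∈ Ap, lin d b > c) → lin d z ≤ c := Iff.rfl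

lemma lin_isLinearMap (d : Fin n → ℝ) : IsLinearMap ℝ (lin d) := by
  constructor
  · intro x y
    simp [lin, mul_add, Finset.sum_add_distrib]
  · intro c x
    simp [lin, Finset.mul_sum, mul_left_comm, mul_comm, mul_assoc]

lemma lin_add (d x y : Fin n → ℝ) : lin d (x + y) = lin d x + lin d y :=
  (lin_isLinearMap d).map_add x y

lemma lin_smul (d : Fin n → ℝ) (t : ℝ) (x : Fin n → ℝ) : lin d (t • x) = t * lin d x :=
  (lin_isLinearMap d).map_smul t x

lemma lin_sub (d x y : Fin n → ℝ) : lin d (x - y) = lin d x - lin d y := by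
  have := (lin_isLinearMap d).mk' ..
  simpa using map_sub ((lin_isLinearMap d).mk' (lin d)) x y

lemma lin_zero (d : Fin n → ℝ) : lin d 0 = 0 := by simp [lin]

lemma hull_le {A : Set (Fin n → ℝ)} {d : Fin n → ℝ} {c : ℝ}
    (h : ∀ a ∈ A, lin d a ≤ c) : ∀ p ∈ convexHull ℝ A, lin d p ≤ c := fun p hp =>
  convexHull_min h (convex_halfSpace_le (lin_isLinearMap d) c) hp

lemma hull_lt {A : Set (Fin n → ℝ)} {d : Fin n → ℝ} {c : ℝ}
    (h : ∀ a ∈ A, lin d a < c) : ∀ p ∈ convexHull ℝ A, lin d p < c := fun p hp =>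
  convexHull_min h (convex_halfSpace_lt (lin_isLinearMap d) c) hp

lemma hull_gt {A : Set (Fin n → ℝ)} {d : Fin n → ℝ} {c : ℝ}
    (h : ∀ b ∈ A, lin d b > c) : ∀ p ∈ convexHull ℝ A, lin d p > c := fun p hp =>
  convexHull_min h (convex_halfSpace_gt (lin_isLinearMap d) c) hp

lemma subset_safe {A Ap : Set (Fin n → ℝ)} : A ⊆ Safe n A Ap :=
  fun x hx => fun d c h1 _ => h1 x hx

lemma safe_mono {A' A Ap : Set (Fin n → ℝ)} (h : A' ⊆ A) : Safe n A' Ap ⊆ Safe n A Ap :=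
  fun z hz d c h1 h2 => hz d c (fun a ha => h1 a (h ha)) h2

/-- The cone of directions from the positive hull towards the negative hull (with 0). -/
def cone0 (P Q : Set (Fin n → ℝ)) : Set (Fin n → ℝ) :=
  {w | w = 0 ∨ ∃ (t : ℝ) (q r : Fin n → ℝ), 0 < t ∧ q ∈ P ∧ r ∈ Q ∧ w = t • (q - r)}

/-- Candidate description of the safe set: hull of the negatives plus the recession cone. -/
def DD (A Ap : Set (Fin n → ℝ)) : Set (Fin n → ℝ) :=
  {x | ∃ p ∈ convexHull ℝ A, ∃ w ∈ cone0 (convexHull ℝ A) (convexHull ℝ Ap), x = p + w}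

lemma cone0_zero {P Q : Set (Fin n → ℝ)} : (0 : Fin n → ℝ) ∈ cone0 P Q := Or.inl rfl

lemma cone0_smul {P Q : Set (Fin n → ℝ)} {s : ℝ} (hs : 0 ≤ s) {w : Fin n → ℝ}
    (hw : w ∈ cone0 P Q) : s • w ∈ cone0 P Q := by
  rcases hw with rfl | ⟨t, q, r, ht, hq, hr, rfl⟩
  · simp [cone0_zero]
  rcases eq_or_lt_of_le hs with rfl | hs
  · simp [cone0_zero]
  · exact Or.inr ⟨s * t, q, r, by positivity, hq, hr, by rw [smul_smul]⟩

lemma cone0_add {P Q : Set (Fin n → ℝ)} (hP : Convex ℝ P) (hQ : Convex ℝ Q)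
    {w₁ w₂ : Fin n → ℝ} (h₁ : w₁ ∈ cone0 P Q) (h₂ : w₂ ∈ cone0 P Q) :
    w₁ + w₂ ∈ cone0 P Q := by
  rcases h₁ with rfl | ⟨t₁, q₁, r₁, ht₁, hq₁, hr₁, rfl⟩
  · simpa using h₂
  rcases h₂ with rfl | ⟨t₂, q₂, r₂, ht₂, hq₂, hr₂, rfl⟩
  · rw [add_zero]; exact Or.inr ⟨t₁, q₁, r₁, ht₁, hq₁, hr₁, rfl⟩
  have ht : 0 < t₁ + t₂ := by linarith
  refine Or.inr ⟨t₁ + t₂, (t₁/(t₁+t₂)) • q₁ + (t₂/(t₁+t₂)) • q₂,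
    (t₁/(t₁+t₂)) • r₁ + (t₂/(t₁+t₂)) • r₂, ht, ?_, ?_, ?_⟩
  · exact hP hq₁ hq₂ (by positivity) (by positivity) (by field_simp)
  · exact hQ hr₁ hr₂ (by positivity) (by positivity) (by field_simp)
  · match_scalars <;> field_simp <;> ring

lemma hull_subset_DD {A Ap : Set (Fin n → ℝ)} : convexHull ℝ A ⊆ DD A Ap :=
  fun p hp => ⟨p, hp, 0, cone0_zero, (add_zero p).symm⟩

lemma DD_convex {A Ap : Set (Fin n → ℝ)} : Convex ℝ (DD A Ap) := by
  rintro x ⟨p, hp, w, hw, rfl⟩ y ⟨q, hq, v, hv, rfl⟩ a b ha hb hab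
  refine ⟨a • p + b • q, (convex_convexHull ℝ A) hp hq ha hb hab,
    a • w + b • v, cone0_add (convex_convexHull ℝ A) (convex_convexHull ℝ Ap)
      (cone0_smul ha hw) (cone0_smul hb hv), by module⟩

lemma DD_subset_safe {A Ap : Set (Fin n → ℝ)} : DD A Ap ⊆ Safe n A Ap := by
  rintro x ⟨p, hp, w, hw, rfl⟩
  rw [mem_Safe]
  intro d c h1 h2
  have hp' : lin d p ≤ c := hull_le h1 p hp
  have hw' : lin d w ≤ 0 := by
    rcases hw with rfl | ⟨t, q, r, ht, hq, hr, rfl⟩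
    · simp [lin_zero]
    · rw [lin_smul, lin_sub]
      have h3 : lin d q ≤ c := hull_le h1 q hq
      have h4 : c < lin d r := hull_gt h2 r hr
      nlinarith
  rw [lin_add]; linarith

lemma cone0_lin_neg {A Ap : Set (Fin n → ℝ)} {d₀ : Fin n → ℝ} {c₀ : ℝ}
    (h₁ : ∀ a ∈ A, lin d₀ a < c₀) (h₂ : ∀ b ∈ Ap, lin d₀ b > c₀)
    {w : Fin n → ℝ} (hw : w ∈ cone0 (convexHull ℝ A) (convexHull ℝ Ap)) :
    w = 0 ∨ lin d₀ w < 0 := by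
  rcases hw with rfl | ⟨t, q, r, ht, hq, hr, rfl⟩
  · exact Or.inl rfl
  · right
    rw [lin_smul, lin_sub]
    have h3 := hull_lt h₁ q hq
    have h4 := hull_gt h₂ r hr
    nlinarith

lemma combo_mem {s : Set (Fin n → ℝ)} (hs : Convex ℝ s) {a b : ℝ} {p q : Fin n → ℝ}
    (ha : 0 ≤ a) (hb : 0 ≤ b) (hab : a + b = 1)
    (hp : 0 < a → p ∈ s) (hq : 0 < b → q ∈ s) : a • p + b • q ∈ s := by
  rcases eq_or_lt_of_le ha with rfl | ha'
  · have hb1 : b = 1 := by linarith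
    simpa [hb1] using hq (by linarith)
  rcases eq_or_lt_of_le hb with rfl | hb'
  · have ha1 : a = 1 := by linarith
    simpa [ha1] using hp ha'
  exact hs (hp ha') (hq hb') ha hb hab

lemma combo_mem3 {s : Set (Fin n → ℝ)} (hs : Convex ℝ s) {a b c : ℝ} {p q r : Fin n → ℝ}
    (ha : 0 ≤ a) (hb : 0 ≤ b) (hc : 0 ≤ c) (habc : a + b + c = 1)
    (hp : 0 < a → p ∈ s) (hq : 0 < b → q ∈ s) (hr : 0 < c → r ∈ s) :
    a • p + b • q + c • r ∈ s := by
  rcases eq_or_lt_of_le hc with rfl | hc'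
  · simpa using combo_mem hs ha hb (by linarith) hp hq
  rcases eq_or_lt_of_le (by positivity : (0:ℝ) ≤ a + b) with hab0 | hab0
  · have ha0 : a = 0 := by linarith
    have hb0 : b = 0 := by linarith
    have hc1 : c = 1 := by linarith
    simpa [ha0, hb0, hc1] using hr hc'
  have hmem : (a/(a+b)) • p + (b/(a+b)) • q ∈ s := by
    refine combo_mem hs (by positivity) (by positivity) (by field_simp) ?_ ?_
    · intro h
      have := mul_pos h hab0
      rw [div_mul_cancel₀ _ (ne_of_gt hab0)] at this
      exact hp this
    · intro h
      have := mul_pos h hab0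
      rw [div_mul_cancel₀ _ (ne_of_gt hab0)] at this
      exact hq this
  have := combo_mem hs (le_of_lt hab0) hc (by linarith) (fun _ => hmem) (fun _ => hr hc')
  have heq : (a+b) • ((a/(a+b)) • p + (b/(a+b)) • q) + c • r = a • p + b • q + c • r := by
    match_scalars <;> field_simp
  rwa [heq] at this

/-- A point of the hull of `S` decomposes along `x` and the hull of `S \ {x}`. -/
lemma hull_decomp {x : Fin n → ℝ} {S : Set (Fin n → ℝ)} (hx : x ∈ S)
    {p : Fin n → ℝ} (hp : p ∈ convexHull ℝ S) :
    ∃ (l m : ℝ) (p' : Fin n → ℝ), 0 ≤ l ∧ 0 ≤ m ∧ l + m = 1 ∧ p = l • x + m • p' ∧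
      (0 < m → p' ∈ convexHull ℝ (S \ {x})) := by
  rcases Set.eq_empty_or_nonempty (S \ {x}) with he | hne
  · have hSx : S = {x} := by
      apply Set.eq_singleton_iff_unique_mem.2
      refine ⟨hx, fun y hy => ?_⟩
      by_contra hyx
      exact absurd (Set.mem_diff_singleton.2 ⟨hy, hyx⟩) (he ▸ Set.notMem_empty y)
    rw [hSx, convexHull_singleton, Set.mem_singleton_iff] at hp
    exact ⟨1, 0, x, zero_le_one, le_refl 0, by ring, by simp [hp], fun h => absurd h (lt_irrefl 0)⟩
  · have hS : S = insert x (S \ {x}) := by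
      rw [Set.insert_diff_singleton, Set.insert_eq_self.2 hx]
    rw [hS, convexHull_insert hne] at hp
    rw [mem_convexJoin] at hp
    obtain ⟨x', hx', b, hb, hseg⟩ := hp
    rw [Set.mem_singleton_iff] at hx'
    subst hx'
    obtain ⟨l, m, hl, hm, hlm, heq⟩ := hseg
    exact ⟨l, m, b, hl, hm, hlm, heq.symm, fun _ => hb⟩

lemma safe_empty {Ap : Set (Fin n → ℝ)} : Safe n (∅ : Set (Fin n → ℝ)) Ap = ∅ := by
  ext z
  simp only [Set.mem_empty_iff_false, iff_false]
  intro hz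
  have h0 : ∀ b ∈ Ap, ∑ i, (0 : Fin n → ℝ) i * b i > (-1 : ℝ) := by
    intro b _
    have h : ∑ i, (0 : Fin n → ℝ) i * b i = 0 := by simp
    rw [h]; norm_num
  have := hz 0 (-1) (by simp) h0
  have h1 : ∑ i, (0 : Fin n → ℝ) i * z i = 0 := by simp
  rw [h1] at this
  linarith

end Aux

section Hard

open Set

variable {n : ℕ}

lemma DD_closed {A Ap : Set (Fin n → ℝ)} (hA : A.Finite) (hAp : Ap.Finite)
    {d₀ : Fin n → ℝ} {c₀ : ℝ} (h₁ : ∀ a ∈ A, lin d₀ a < c₀) (h₂ : ∀ b ∈ Ap, lin d₀ b > c₀) :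
    IsClosed (DD A Ap) := by
  set P := convexHull ℝ A with hPdef
  set Q := convexHull ℝ Ap with hQdef
  have hPc : IsCompact P := hA.isCompact_convexHull ℝ
  have hQc : IsCompact Q := hAp.isCompact_convexHull ℝ
  rcases Set.eq_empty_or_nonempty Q with hQe | hQne
  · have hDD : DD A Ap = P := by
      apply Set.Subset.antisymm
      · rintro x ⟨p, hp, w, hw, rfl⟩
        rcases hw with rfl | ⟨t, q, r, _, _, hr, _⟩
        · simpa using hp
        · exact absurd (hQe ▸ hr : r ∈ (∅ : Set (Fin n → ℝ))) (Set.notMem_empty r)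
      · exact hull_subset_DD
    rw [hDD]
    exact hPc.isClosed
  rcases Set.eq_empty_or_nonempty P with hPe | hPne
  · have hDD : DD A Ap = ∅ := by
      apply Set.eq_empty_iff_forall_notMem.2
      rintro x ⟨p, hp, _⟩
      exact absurd (hPe ▸ hp : p ∈ (∅ : Set (Fin n → ℝ))) (Set.notMem_empty p)
    rw [hDD]; exact isClosed_empty
  -- both hulls nonempty: minimum distance between them is positive
  obtain ⟨m, hmK, hmin⟩ := (hPc.prod hQc).exists_isMinOn (hPne.prod hQne)
    ((continuous_fst.sub continuous_snd).norm.continuousOn)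
  set δ := ‖m.1 - m.2‖ with hδdef
  have hmP : m.1 ∈ P := hmK.1
  have hmQ : m.2 ∈ Q := hmK.2
  have hδ : 0 < δ := by
    rcases eq_or_ne m.1 m.2 with he | hne
    · have := hull_lt h₁ m.1 hmP
      have := hull_gt h₂ m.2 hmQ
      rw [he] at *
      linarith
    · simpa [hδdef, norm_pos_iff, sub_eq_zero] using hne
  have hδle : ∀ q ∈ P, ∀ r ∈ Q, δ ≤ ‖q - r‖ := by
    intro q hq r hr
    exact isMinOn_iff.1 hmin (q, r) (Set.mk_mem_prod hq hr)
  obtain ⟨M₀, hM₀⟩ := hPc.isBounded.subset_closedBall 0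
  have hM₀' : ∀ p ∈ P, ‖p‖ ≤ M₀ := by
    intro p hp
    have := hM₀ hp
    rwa [Metric.mem_closedBall, dist_zero_right] at this
  have hM₀0 : 0 ≤ M₀ := le_trans (norm_nonneg _) (hM₀' _ hPne.choose_spec)
  refine isClosed_of_closure_subset fun x hx => ?_
  set R : ℝ := ‖x‖ + 1 with hRdef
  set T : ℝ := (R + M₀) / δ with hTdef
  have hT : 0 ≤ T := by
    apply div_nonneg _ hδ.le
    positivity
  set φ : ((Fin n → ℝ) × (Fin n → ℝ)) × ((Fin n → ℝ) × ℝ) → (Fin n → ℝ) :=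
    fun w => w.1.1 + w.2.2 • (w.1.2 - w.2.1) with hφdef
  have hφc : Continuous φ := by
    apply Continuous.add
    · exact continuous_fst.comp continuous_fst
    · exact ((continuous_snd.comp continuous_snd).smul
        ((continuous_snd.comp continuous_fst).sub (continuous_fst.comp continuous_snd)))
  set ER := φ '' ((P ×ˢ P) ×ˢ (Q ×ˢ Set.Icc (0:ℝ) T)) with hERdef
  have hERc : IsCompact ER := (((hPc.prod hPc).prod (hQc.prod isCompact_Icc)).image hφc)
  have hER_DD : ER ⊆ DD A Ap := by
    rintro y ⟨⟨⟨p, q⟩, ⟨r, t⟩⟩, ⟨⟨hp, hq⟩, ⟨hr, ht⟩⟩, rfl⟩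
    rcases eq_or_lt_of_le ht.1 with h0 | h0
    · have h0' : t = 0 := h0.symm
      subst h0'
      exact ⟨p, hp, 0, cone0_zero, by simp [φ]⟩
    · exact ⟨p, hp, _, Or.inr ⟨t, q, r, h0, hq, hr, rfl⟩, rfl⟩
  have hsub : DD A Ap ∩ Metric.closedBall x 1 ⊆ ER := by
    rintro y ⟨⟨p, hp, w, hw, rfl⟩, hball⟩
    have hynorm : ‖p + w‖ ≤ R := by
      have h1 : dist (p + w) x ≤ 1 := Metric.mem_closedBall.1 hball
      have h2 : ‖p + w‖ ≤ ‖p + w - x‖ + ‖x‖ := by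
        calc ‖p + w‖ = ‖(p + w - x) + x‖ := by congr 1; abel
          _ ≤ ‖p + w - x‖ + ‖x‖ := norm_add_le _ _
      have h3 : ‖p + w - x‖ ≤ 1 := by rw [← dist_eq_norm] at *; exact h1
      rw [hRdef]; linarith
    rcases hw with rfl | ⟨t, q, r, ht, hq, hr, rfl⟩
    · obtain ⟨r0, hr0⟩ := hQne
      exact ⟨((p, p), (r0, 0)), ⟨⟨hp, hp⟩, hr0, ⟨le_refl 0, hT⟩⟩, by simp [φ]⟩
    · have htT : t ≤ T := by
        have h1 : t * δ ≤ t * ‖q - r‖ := by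
          apply mul_le_mul_of_nonneg_left (hδle q hq r hr) ht.le
        have h2 : t * ‖q - r‖ = ‖t • (q - r)‖ := by
          rw [norm_smul]
          simp [abs_of_pos ht]
        have h4 : ‖t • (q - r)‖ ≤ ‖p + t • (q - r)‖ + ‖p‖ := by
          calc ‖t • (q - r)‖ = ‖(p + t • (q - r)) - p‖ := by congr 1; abel
            _ ≤ ‖p + t • (q - r)‖ + ‖p‖ := norm_sub_le _ _
        have h5 : t * δ ≤ R + M₀ := by
          have := hM₀' p hp
          linarith
        rw [hTdef, le_div_iff₀ hδ]
        linarith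
      exact ⟨((p, q), (r, t)), ⟨⟨hp, hq⟩, hr, ⟨ht.le, htT⟩⟩, rfl⟩
  have hx1 : x ∈ closure (DD A Ap ∩ Metric.closedBall x 1) := by
    rw [mem_closure_iff_nhds] at hx ⊢
    intro U hU
    obtain ⟨y, hyU, hyD⟩ := hx (U ∩ Metric.closedBall x 1)
      (Filter.inter_mem hU (Metric.closedBall_mem_nhds x one_pos))
    exact ⟨y, hyU.1, hyD, hyU.2⟩
  exact hER_DD (hERc.isClosed.closure_subset ((closure_mono hsub) hx1))

lemma safe_subset_DD {A Ap : Set (Fin n → ℝ)} (hA : A.Finite) (hAp : Ap.Finite)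
    {d₀ : Fin n → ℝ} {c₀ : ℝ} (h₁ : ∀ a ∈ A, lin d₀ a < c₀) (h₂ : ∀ b ∈ Ap, lin d₀ b > c₀) :
    Safe n A Ap ⊆ DD A Ap := by
  intro z hz
  by_contra hzD
  rcases A.eq_empty_or_nonempty with rfl | hAne
  · rw [safe_empty] at hz
    exact hz
  obtain ⟨f, u, hfu, hux⟩ :=
    geometric_hahn_banach_closed_point DD_convex (DD_closed hA hAp h₁ h₂) hzD
  set d : Fin n → ℝ := fun i => f (Pi.single i 1) with hd
  have hfl : ∀ w, f w = lin d w := by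
    intro w
    have hw : w = ∑ i, w i • (Pi.single i 1 : Fin n → ℝ) := by
      ext j
      rw [Finset.sum_apply]
      simp [Pi.single_apply]
    conv_lhs => rw [hw]
    rw [map_sum]
    simp [lin, hd, mul_comm]
  rw [hfl] at hux
  have hfu' : ∀ w ∈ DD A Ap, lin d w < u := fun w hw => (hfl w) ▸ hfu w hw
  have hAmem : ∀ a ∈ A, a ∈ DD A Ap := fun a ha =>
    hull_subset_DD (subset_convexHull ℝ A ha)
  -- the maximum of lin d over A
  set Af := hA.toFinset with hAf
  have hAfne : Af.Nonempty := by
    obtain ⟨a0, ha0⟩ := hAne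
    exact ⟨a0, hA.mem_toFinset.2 ha0⟩
  set M := Af.sup' hAfne (fun a => lin d a) with hM
  have hMle : ∀ a ∈ A, lin d a ≤ M := fun a ha =>
    Finset.le_sup' (fun a => lin d a) (hA.mem_toFinset.2 ha)
  obtain ⟨a₀, ha₀Af, ha₀⟩ := Finset.exists_mem_eq_sup' hAfne (fun a => lin d a)
  have ha₀A : a₀ ∈ A := hA.mem_toFinset.1 ha₀Af
  have hMu : M < u := by
    rw [hM, ha₀]
    exact hfu' a₀ (hAmem a₀ ha₀A)
  -- key: lin d is smaller on A than on Ap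
  have hkey : ∀ a ∈ A, ∀ b ∈ Ap, lin d a ≤ lin d b := by
    intro a ha b hb
    by_contra hab
    push_neg at hab
    set e := lin d a - lin d b with he
    have he0 : 0 < e := by rw [he]; linarith
    have hfa : lin d a < u := hfu' a (hAmem a ha)
    set t := (u - lin d a) / e + 1 with htdef
    have ht0 : 0 < t := by
      rw [htdef]
      have h10 : 0 < (u - lin d a) / e := div_pos (by linarith) he0
      linarith
    have hmem : a + t • (a - b) ∈ DD A Ap :=
      ⟨a, subset_convexHull ℝ A ha, _,
        Or.inr ⟨t, a, b, ht0, subset_convexHull ℝ A ha, subset_convexHull ℝ Ap hb, rfl⟩, rfl⟩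
    have hval := hfu' _ hmem
    rw [lin_add, lin_smul, lin_sub] at hval
    have hte : t * e = (u - lin d a) + e := by
      rw [htdef, add_mul, div_mul_cancel₀ _ (ne_of_gt he0), one_mul]
    rw [he] at hte
    nlinarith
  have hbM : ∀ b ∈ Ap, M ≤ lin d b := by
    intro b hb
    rw [hM, ha₀]
    exact hkey a₀ ha₀A b hb
  set ε := lin d z - M with hε
  have hε0 : 0 < ε := by rw [hε]; linarith
  set s₀ := |c₀ - lin d₀ z| with hs₀
  have hs₀0 : 0 ≤ s₀ := abs_nonneg _
  set t := min 1 (ε / (2 * (s₀ + 1))) with htdef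
  have ht0 : 0 < t := lt_min one_pos (by positivity)
  set g : Fin n → ℝ := fun i => d i + t * d₀ i with hg
  have hling : ∀ w, lin g w = lin d w + t * lin d₀ w := by
    intro w
    simp only [lin, hg, add_mul, Finset.sum_add_distrib, Finset.mul_sum]
    ring_nf
  have hva : ∀ a ∈ A, lin g a ≤ M + t * c₀ := by
    intro a ha
    rw [hling]
    have h5 := hMle a ha
    have h6 : t * lin d₀ a ≤ t * c₀ := by
      apply mul_le_mul_of_nonneg_left (h₁ a ha).le ht0.le
    linarith
  have hvb : ∀ b ∈ Ap, lin g b > M + t * c₀ := by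
    intro b hb
    rw [hling]
    have h5 := hbM b hb
    have h6 : t * c₀ < t * lin d₀ b := by
      apply (mul_lt_mul_iff_right₀ ht0).2 (h₂ b hb)
    linarith
  have hfinal : lin g z ≤ M + t * c₀ := hz g (M + t * c₀) hva hvb
  rw [hling] at hfinal
  -- but lin d z = M + ε and t * (c₀ - lin d₀ z) < ε
  have h7 : t * (c₀ - lin d₀ z) ≤ t * s₀ := by
    apply mul_le_mul_of_nonneg_left (le_abs_self _) ht0.le
  have h8 : t * s₀ < ε := by
    have h9 : t ≤ ε / (2 * (s₀ + 1)) := min_le_right _ _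
    calc t * s₀ ≤ (ε / (2 * (s₀ + 1))) * s₀ :=
          mul_le_mul_of_nonneg_right h9 hs₀0
      _ < ε := by
          rw [div_mul_eq_mul_div, div_lt_iff₀ (by positivity)]
          nlinarith
  nlinarith

end Hard

set_option maxHeartbeats 2000000 in
/-- for strictly separable finite `S₋, S₊`, the must-leak set
`B = {x ∈ S₋ : x ∉ Safe(S₋ \ {x}, S₊)}` equals the set of extreme points of
`Safe(S₋, S₊)` lying in `S₋`. -/
theorem stmt12 (n : ℕ) (Sm Sp : Finset (Fin n → ℝ))
    (hsep : ∃ (d : Fin n → ℝ) (c : ℝ),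
      (∀ y ∈ Sm, ∑ i, d i * y i < c) ∧ (∀ x ∈ Sp, ∑ i, d i * x i > c)) :
    {x ∈ (Sm : Set (Fin n → ℝ)) | x ∉ Safe n (↑Sm \ {x}) ↑Sp} =
      {x ∈ (Sm : Set (Fin n → ℝ)) | x ∈ Set.extremePoints ℝ (Safe n ↑Sm ↑Sp)} := by
  classical
  obtain ⟨d₀, c₀, h₁, h₂⟩ := hsep
  have h₁' : ∀ a ∈ (Sm : Set (Fin n → ℝ)), lin d₀ a < c₀ := fun a ha => h₁ a ha
  have h₂' : ∀ b ∈ (Sp : Set (Fin n → ℝ)), lin d₀ b > c₀ := fun b hb => h₂ b hb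
  have hSmfin : (Sm : Set (Fin n → ℝ)).Finite := Sm.finite_toSet
  have hSpfin : (Sp : Set (Fin n → ℝ)).Finite := Sp.finite_toSet
  have hconvSm := convex_convexHull ℝ (Sm : Set (Fin n → ℝ))
  ext x
  simp only [Set.mem_setOf_eq]
  constructor
  · -- must-leak point is an extreme point
    rintro ⟨hxSm, hxS'⟩
    refine ⟨hxSm, ?_⟩
    have hA'fin : ((Sm : Set (Fin n → ℝ)) \ {x}).Finite := hSmfin.diff
    have h₁A' : ∀ a ∈ (Sm : Set (Fin n → ℝ)) \ {x}, lin d₀ a < c₀ := fun a ha => h₁' a ha.1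
    have hxD' : x ∉ DD ((Sm : Set (Fin n → ℝ)) \ {x}) ↑Sp := fun h => hxS' (DD_subset_safe h)
    have hA'Sm : convexHull ℝ ((Sm : Set (Fin n → ℝ)) \ {x}) ⊆ convexHull ℝ (Sm : Set (Fin n → ℝ)) :=
      convexHull_mono Set.diff_subset
    rw [mem_extremePoints]
    refine ⟨subset_safe hxSm, ?_⟩
    intro y hy z hz hseg
    have hsub := safe_subset_DD hSmfin hSpfin h₁' h₂'
    obtain ⟨p, hp, uu, huu, hyeq⟩ := hsub hy
    obtain ⟨q, hq, vv, hvv, hzeq⟩ := hsub hz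
    obtain ⟨α, β, hα, hβ, hαβ, hxeq⟩ := hseg
    have hsmem : α • p + β • q ∈ convexHull ℝ (Sm : Set (Fin n → ℝ)) :=
      hconvSm hp hq hα.le hβ.le hαβ
    have hwC : α • uu + β • vv ∈
        cone0 (convexHull ℝ (Sm : Set (Fin n → ℝ))) (convexHull ℝ (Sp : Set (Fin n → ℝ))) :=
      cone0_add (convex_convexHull ℝ _) (convex_convexHull ℝ _)
        (cone0_smul hα.le huu) (cone0_smul hβ.le hvv)
    have hxsw : x = (α • p + β • q) + (α • uu + β • vv) := by
      rw [← hxeq, hyeq, hzeq]; module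
    -- Phase 1: the cone part vanishes
    have hw0 : α • uu + β • vv = 0 := by
      rcases hwC with h | ⟨t, q₁, r, ht, hq₁, hr, hweq⟩
      · exact h
      exfalso
      obtain ⟨ll, lm, rs, hll0, hlm0, hlsum, hseq, hrs⟩ := hull_decomp hxSm hsmem
      obtain ⟨μl, μm, q', hμl0, hμm0, hμsum, hq₁eq, hq'⟩ := hull_decomp hxSm hq₁
      have hmaster : (lm - t * μl) • x = lm • rs + (t * μm) • q' - t • r := by
        have hx2 : x = ((1 - lm) • x + lm • rs) + t • (((1 - μm) • x + μm • q') - r) := by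
          calc x = (α • p + β • q) + (α • uu + β • vv) := hxsw
            _ = ((1 - lm) • x + lm • rs) + t • (((1 - μm) • x + μm • q') - r) := by
                rw [hweq, hq₁eq, hseq]
                have e1 : ll = 1 - lm := by linarith
                have e2 : μl = 1 - μm := by linarith
                rw [e1, e2]
        have e2 : μl = 1 - μm := by linarith
        rw [e2]
        linear_combination (norm := module) hx2
      have hsum2 : lm + t * μm = (lm - t * μl) + t := by
        have h10 : t * μl + t * μm = t := by
          rw [← mul_add, hμsum, mul_one]
        linarith
      rcases lt_trichotomy (lm - t * μl) 0 with hθ | hθ | hθ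
      · -- θ < 0 : the positive hull meets the negative hull
        have ht' : (t:ℝ) ≠ 0 := ht.ne'
        have h1 : t • r = lm • rs + (t * μm) • q' - (lm - t * μl) • x := by
          linear_combination (norm := module) hmaster
        have hrex : r = t⁻¹ • (lm • rs + (t * μm) • q' - (lm - t * μl) • x) := by
          rw [← h1, smul_smul, inv_mul_cancel₀ ht', one_smul]
        have hr2 : r = ((-(lm - t * μl))/t) • x + (lm/t) • rs + ((t * μm)/t) • q' := by
          rw [hrex]; match_scalars <;> field_simp <;> ring
        have hrmem : r ∈ convexHull ℝ (Sm : Set (Fin n → ℝ)) := by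
          rw [hr2]
          refine combo_mem3 hconvSm ?_ ?_ ?_ ?_ ?_ ?_ ?_
          · apply div_nonneg (by linarith) ht.le
          · exact div_nonneg hlm0 ht.le
          · apply div_nonneg (by positivity) ht.le
          · field_simp
            linarith
          · intro _; exact subset_convexHull ℝ _ hxSm
          · intro h
            have h11 := mul_pos h ht
            rw [div_mul_cancel₀ _ ht'] at h11
            exact hA'Sm (hrs h11)
          · intro h
            have h11 := mul_pos h ht
            rw [div_mul_cancel₀ _ ht'] at h11
            have hμm : 0 < μm := by nlinarith
            exact hA'Sm (hq' hμm)
        have hc1 := hull_lt h₁' r hrmem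
        have hc2 := hull_gt h₂' r hr
        linarith
      · -- θ = 0 : again the hulls meet
        have ht' : (t:ℝ) ≠ 0 := ht.ne'
        have h0 : (0:ℝ) • x = lm • rs + (t * μm) • q' - t • r := by rw [← hθ]; exact hmaster
        rw [zero_smul] at h0
        have h1 : t • r = lm • rs + (t * μm) • q' := by
          linear_combination (norm := module) h0
        have hrex : r = t⁻¹ • (lm • rs + (t * μm) • q') := by
          rw [← h1, smul_smul, inv_mul_cancel₀ ht', one_smul]
        have hr2 : r = (lm/t) • rs + ((t * μm)/t) • q' := by
          rw [hrex]; match_scalars <;> field_simp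
        have hrmem : r ∈ convexHull ℝ (Sm : Set (Fin n → ℝ)) := by
          rw [hr2]
          refine combo_mem hconvSm ?_ ?_ ?_ ?_ ?_
          · exact div_nonneg hlm0 ht.le
          · apply div_nonneg (by positivity) ht.le
          · field_simp
            linarith
          · intro h
            have h11 := mul_pos h ht
            rw [div_mul_cancel₀ _ ht'] at h11
            exact hA'Sm (hrs h11)
          · intro h
            have h11 := mul_pos h ht
            rw [div_mul_cancel₀ _ ht'] at h11
            have hμm : 0 < μm := by nlinarith
            exact hA'Sm (hq' hμm)
        have hc1 := hull_lt h₁' r hrmem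
        have hc2 := hull_gt h₂' r hr
        linarith
      · -- θ > 0 : x would be a safe point of Sm \ {x}
        have hθ' : (lm - t * μl) ≠ 0 := hθ.ne'
        have hθtpos : 0 < (lm - t * μl) + t := by linarith
        have hθt : (lm - t * μl) + t ≠ 0 := hθtpos.ne'
        have hxex : x = (lm - t * μl)⁻¹ • (lm • rs + (t * μm) • q' - t • r) := by
          rw [← hmaster, smul_smul, inv_mul_cancel₀ hθ', one_smul]
        have hsum3 : lm / ((lm - t * μl) + t) + (t * μm) / ((lm - t * μl) + t) = 1 := by
          rw [← add_div, ← hsum2]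
          exact div_self (by rw [hsum2]; exact hθt)
        have hqhmem : (lm/((lm - t * μl) + t)) • rs + ((t * μm)/((lm - t * μl) + t)) • q' ∈
            convexHull ℝ ((Sm : Set (Fin n → ℝ)) \ {x}) := by
          refine combo_mem (convex_convexHull ℝ _) ?_ ?_ hsum3 ?_ ?_
          · exact div_nonneg hlm0 hθtpos.le
          · exact div_nonneg (by positivity) hθtpos.le
          · intro h
            have h11 := mul_pos h hθtpos
            rw [div_mul_cancel₀ _ hθt] at h11
            exact hrs h11
          · intro h
            have h11 := mul_pos h hθtpos
            rw [div_mul_cancel₀ _ hθt] at h11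
            have hμm : 0 < μm := by nlinarith
            exact hq' hμm
        refine hxD' ⟨_, hqhmem, _,
          Or.inr ⟨t/(lm - t * μl), _, r, div_pos ht hθ, hqhmem, hr, rfl⟩, ?_⟩
        rw [hxex]
        match_scalars <;> field_simp <;> ring
    -- Phase 2: each cone part vanishes
    have hlinw : α * lin d₀ uu + β * lin d₀ vv = 0 := by
      have h12 : lin d₀ (α • uu + β • vv) = 0 := by rw [hw0, lin_zero]
      rw [lin_add, lin_smul, lin_smul] at h12
      exact h12
    have hu0 : uu = 0 := by
      rcases cone0_lin_neg h₁' h₂' huu with h | h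
      · exact h
      exfalso
      rcases cone0_lin_neg h₁' h₂' hvv with h' | h'
      · rw [h', lin_zero] at hlinw; nlinarith
      · nlinarith
    have hv0 : vv = 0 := by
      rcases cone0_lin_neg h₁' h₂' hvv with h | h
      · exact h
      exfalso
      rcases cone0_lin_neg h₁' h₂' huu with h' | h'
      · rw [h', lin_zero] at hlinw; nlinarith
      · nlinarith
    rw [hu0, add_zero] at hyeq
    rw [hv0, add_zero] at hzeq
    -- Phase 3: x is a vertex of the hull of Sm
    obtain ⟨a₁, a₂, p', ha₁0, ha₂0, ha₁sum, hpeq, hp'⟩ := hull_decomp hxSm hp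
    obtain ⟨b₁, b₂, q', hb₁0, hb₂0, hb₁sum, hqeq, hq'2⟩ := hull_decomp hxSm hq
    have hmaster3 : (α * a₂ + β * b₂) • x = (α * a₂) • p' + (β * b₂) • q' := by
      have hx3 : x = α • ((1 - a₂) • x + a₂ • p') + β • ((1 - b₂) • x + b₂ • q') := by
        calc x = α • p + β • q := by rw [← hxeq, hyeq, hzeq]
          _ = α • ((1 - a₂) • x + a₂ • p') + β • ((1 - b₂) • x + b₂ • q') := by
              rw [hpeq, hqeq]
              have e1 : a₁ = 1 - a₂ := by linarith
              have e2 : b₁ = 1 - b₂ := by linarith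
              rw [e1, e2]
      have e3 : β = 1 - α := by linarith
      rw [e3] at hx3 ⊢
      linear_combination (norm := module) hx3
    have hγ0 : 0 ≤ α * a₂ + β * b₂ := by nlinarith
    rcases eq_or_lt_of_le hγ0 with hγ | hγ
    · -- both coefficients vanish, so p = q = x
      have ha2 : a₂ = 0 := by nlinarith
      have hb2 : b₂ = 0 := by nlinarith
      have ha1 : a₁ = 1 := by linarith
      have hb1 : b₁ = 1 := by linarith
      constructor
      · rw [hyeq, hpeq, ha1, ha2]; simp
      · rw [hzeq, hqeq, hb1, hb2]; simp
    · -- otherwise x lies in the hull of Sm \ {x}, contradiction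
      exfalso
      have hγ' : (α * a₂ + β * b₂) ≠ 0 := hγ.ne'
      have hxex : x = (α * a₂ + β * b₂)⁻¹ • ((α * a₂) • p' + (β * b₂) • q') := by
        rw [← hmaster3, smul_smul, inv_mul_cancel₀ hγ', one_smul]
      have hx4 : x = ((α * a₂)/(α * a₂ + β * b₂)) • p' + ((β * b₂)/(α * a₂ + β * b₂)) • q' := by
        rw [hxex]; match_scalars <;> field_simp <;> ring
      have hxmem : ((α * a₂)/(α * a₂ + β * b₂)) • p' + ((β * b₂)/(α * a₂ + β * b₂)) • q' ∈
          convexHull ℝ ((Sm : Set (Fin n → ℝ)) \ {x}) := by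
        refine combo_mem (convex_convexHull ℝ _) ?_ ?_ ?_ ?_ ?_
        · exact div_nonneg (mul_nonneg hα.le ha₂0) hγ0
        · exact div_nonneg (mul_nonneg hβ.le hb₂0) hγ0
        · rw [← add_div]; exact div_self hγ'
        · intro h
          have h11 := mul_pos h hγ
          rw [div_mul_cancel₀ _ hγ'] at h11
          have : 0 < a₂ := by nlinarith
          exact hp' this
        · intro h
          have h11 := mul_pos h hγ
          rw [div_mul_cancel₀ _ hγ'] at h11
          have : 0 < b₂ := by nlinarith
          exact hq'2 this
      rw [← hx4] at hxmem
      exact hxD' (hull_subset_DD hxmem)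
  · -- extreme points must leak
    rintro ⟨hxSm, hxE⟩
    refine ⟨hxSm, ?_⟩
    intro hxS'
    have hA'fin : ((Sm : Set (Fin n → ℝ)) \ {x}).Finite := hSmfin.diff
    have h₁A' : ∀ a ∈ (Sm : Set (Fin n → ℝ)) \ {x}, lin d₀ a < c₀ := fun a ha => h₁' a ha.1
    have hxD' : x ∈ DD ((Sm : Set (Fin n → ℝ)) \ {x}) ↑Sp :=
      safe_subset_DD hA'fin hSpfin h₁A' h₂' hxS'
    have hDD'Safe : DD ((Sm : Set (Fin n → ℝ)) \ {x}) ↑Sp ⊆ Safe n ↑Sm ↑Sp :=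
      fun w hw => safe_mono Set.diff_subset (DD_subset_safe hw)
    obtain ⟨r, hrA', w, hwC, hxeq⟩ := hxD'
    rcases hwC with rfl | ⟨t, q, rr, ht, hq, hrr, rfl⟩
    · -- x lies in the hull of Sm \ {x}: it is then not extreme there unless it belongs to it
      rw [add_zero] at hxeq
      subst hxeq
      have hrE : x ∈ Set.extremePoints ℝ (convexHull ℝ ((Sm : Set (Fin n → ℝ)) \ {x})) := by
        refine ⟨hrA', fun y hy z hz hseg => ?_⟩
        exact hxE.2 (hDD'Safe (hull_subset_DD hy)) (hDD'Safe (hull_subset_DD hz)) hseg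
      have := extremePoints_convexHull_subset hrE
      exact this.2 rfl
    · -- x moves along a cone direction: midpoint of two safe points
      have hy : r ∈ Safe n ↑Sm ↑Sp := hDD'Safe (hull_subset_DD hrA')
      have hz : r + (2 * t) • (q - rr) ∈ Safe n ↑Sm ↑Sp :=
        hDD'Safe ⟨r, hrA', _, Or.inr ⟨2 * t, q, rr, by linarith, hq, hrr, rfl⟩, rfl⟩
      have hseg : x ∈ openSegment ℝ r (r + (2 * t) • (q - rr)) := by
        refine ⟨1/2, 1/2, by norm_num, by norm_num, by norm_num, ?_⟩
        rw [hxeq]; module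
      obtain ⟨h13, h14⟩ := (mem_extremePoints.1 hxE).2 _ hy _ hz hseg
      have h15 : (2 * t) • (q - rr) = 0 := by
        rw [h13] at h14
        have := sub_eq_zero.2 h14
        rw [add_sub_cancel_left] at this
        exact this
      rcases smul_eq_zero.1 h15 with h16 | h16
      · linarith [(by linarith : (0:ℝ) < 2 * t)]
      · have hqrr : q = rr := sub_eq_zero.1 h16
        have hc1 := hull_lt h₁A' q hq
        have hc2 := hull_gt h₂' rr hrr
        rw [hqrr] at hc1
        linarith
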